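/- Let n ≥ 1, let S ⊆ {0,1}ⁿ, and for x ∈ {0,1}ⁿ let |x̃⟩ = |x̃₁⟩⊗⋯⊗|x̃ₙ⟩ where |0̃⟩ = |0⟩ and |1̃⟩ = (|0⟩+|1⟩)/√2. Let ψ be any unit vector in the span of {|x̃⟩ : x ∈ S}. Then |S| ≥ |⟨H^{⊗n}|ψ⟩|² · cos(π/8)^{−2n}, where |H⟩ = cos(π/8)|0⟩ + sin(π/8)|1⟩. -/

import Mathlib

open scoped BigOperators

/-- The product stabilizer state `|x̃⟩ = |x̃₁⟩⊗⋯⊗|x̃ₙ⟩` with `|0̃⟩ = |0⟩` and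
`|1̃⟩ = |+⟩ = (|0⟩+|1⟩)/√2`, as a vector in `ℂ^{2ⁿ}` indexed by `Fin n → Bool`. -/
noncomputable def tilde (n : ℕ) (x : Fin n → Bool) : EuclideanSpace ℂ (Fin n → Bool) :=
  (WithLp.equiv 2 ((Fin n → Bool) → ℂ)).symm fun y =>
    ∏ i, (if x i then ((Real.sqrt 2 : ℝ) : ℂ)⁻¹ else if y i then 0 else 1)

/-- The state `|H⟩^{⊗n}` with `|H⟩ = cos(π/8)|0⟩ + sin(π/8)|1⟩`. -/
noncomputable def Hstate (n : ℕ) : EuclideanSpace ℂ (Fin n → Bool) :=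
  (WithLp.equiv 2 ((Fin n → Bool) → ℂ)).symm fun y =>
    ∏ i, (if y i then ((Real.sin (Real.pi / 8) : ℝ) : ℂ)
          else ((Real.cos (Real.pi / 8) : ℝ) : ℂ))

/-! ### Auxiliary lemmas -/

lemma tilde_apply (n : ℕ) (x y : Fin n → Bool) :
    tilde n x y = ∏ i, (if x i then ((Real.sqrt 2 : ℝ) : ℂ)⁻¹ else if y i then 0 else 1) := rfl

lemma Hstate_apply (n : ℕ) (y : Fin n → Bool) :
    Hstate n y = ∏ i, (if y i then ((Real.sin (Real.pi / 8) : ℝ) : ℂ)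
          else ((Real.cos (Real.pi / 8) : ℝ) : ℂ)) := rfl

lemma sqrt_two_inv_ne_zero : ((Real.sqrt 2 : ℝ) : ℂ)⁻¹ ≠ 0 := by
  have : Real.sqrt 2 ≠ 0 := by positivity
  simp [this]

lemma tilde_injective (n : ℕ) : Function.Injective (tilde n) := by
  have key : ∀ a b : Fin n → Bool, tilde n a = tilde n b → ∀ i, a i → b i := by
    intro a b hab i hai
    by_contra hbi
    have h1 : tilde n a a ≠ 0 := by
      rw [tilde_apply]
      refine Finset.prod_ne_zero_iff.2 fun j _ => ?_
      by_cases hj : a j <;> simp [hj, sqrt_two_inv_ne_zero]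
    have h0 : tilde n b a = 0 := by
      rw [tilde_apply]
      refine Finset.prod_eq_zero (Finset.mem_univ i) ?_
      simp [hbi, hai]
    rw [hab] at h1
    exact h1 h0
  intro x y hxy
  funext i
  have h1 := key x y hxy i
  have h2 := key y x hxy.symm i
  cases hx : x i <;> cases hy : y i <;> simp_all

lemma sum_pi_bool {n : ℕ} (F : Fin n → Bool → ℂ) :
    ∑ y : Fin n → Bool, ∏ i, F i (y i) = ∏ i, ∑ b, F i b :=
  (Fintype.prod_sum F).symm

lemma inner_pi_prod {n : ℕ} (f g : Fin n → Bool → ℂ)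
    (u v : EuclideanSpace ℂ (Fin n → Bool))
    (hu : ∀ w, u w = ∏ i, f i (w i)) (hv : ∀ w, v w = ∏ i, g i (w i)) :
    (inner ℂ u v : ℂ) = ∏ i, ∑ b, (starRingEnd ℂ) (f i b) * g i b := by
  rw [PiLp.inner_apply, ← sum_pi_bool fun i b => (starRingEnd ℂ) (f i b) * g i b]
  refine Finset.sum_congr rfl fun w _ => ?_
  rw [RCLike.inner_apply, hu, hv, map_prod, ← Finset.prod_mul_distrib]
  exact Finset.prod_congr rfl fun i _ => mul_comm _ _

lemma cos_add_sin_pi_div_eight :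
    Real.cos (Real.pi / 8) + Real.sin (Real.pi / 8)
      = Real.sqrt 2 * Real.cos (Real.pi / 8) := by
  have h2 : (0:ℝ) ≤ 2 := by norm_num
  have hs2 : Real.sqrt 2 ^ 2 = 2 := Real.sq_sqrt h2
  have hs0 : 0 ≤ Real.sqrt 2 := Real.sqrt_nonneg 2
  have h1 : (1:ℝ) ≤ Real.sqrt 2 := by nlinarith
  have hle : Real.sqrt 2 ≤ 2 := by nlinarith
  have key : Real.sqrt (2 - Real.sqrt 2)
      = (Real.sqrt 2 - 1) * Real.sqrt (2 + Real.sqrt 2) := by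
    have heq : (2:ℝ) - Real.sqrt 2 = (Real.sqrt 2 - 1)^2 * (2 + Real.sqrt 2) := by nlinarith
    rw [heq, Real.sqrt_mul (by positivity), Real.sqrt_sq (by linarith)]
  rw [Real.cos_pi_div_eight, Real.sin_pi_div_eight, key]
  ring

/-- The Gram kernel `K(x,y) = (1/√2)^{|x⊕y|}`. -/
noncomputable def Kgram {n : ℕ} (x y : Fin n → Bool) : ℝ :=
  ∏ i, (if x i = y i then (1:ℝ) else (Real.sqrt 2)⁻¹)

lemma inner_tilde_tilde {n : ℕ} (x y : Fin n → Bool) :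
    (inner ℂ (tilde n x) (tilde n y) : ℂ) = ((Kgram x y : ℝ) : ℂ) := by
  rw [inner_pi_prod
      (fun i b => if x i then ((Real.sqrt 2 : ℝ) : ℂ)⁻¹ else if b then 0 else 1)
      (fun i b => if y i then ((Real.sqrt 2 : ℝ) : ℂ)⁻¹ else if b then 0 else 1)
      (tilde n x) (tilde n y) (fun w => rfl) (fun w => rfl)]
  rw [Kgram, Complex.ofReal_prod]
  refine Finset.prod_congr rfl fun i _ => ?_
  have hmul : ((Real.sqrt 2 : ℝ) : ℂ)⁻¹ * ((Real.sqrt 2 : ℝ) : ℂ)⁻¹ = (2:ℂ)⁻¹ := by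
    rw [← mul_inv, ← Complex.ofReal_mul, Real.mul_self_sqrt (by norm_num)]
    norm_num
  rw [Fintype.sum_bool]
  cases hx : x i <;> cases hy : y i <;>
    simp [hx, hy, ← Complex.ofReal_inv, ← Complex.ofReal_mul, hmul] <;>
    norm_num [Complex.ofReal_inv] <;>
    rw [hmul] <;> norm_num

lemma inner_H_tilde {n : ℕ} (x : Fin n → Bool) :
    (inner ℂ (Hstate n) (tilde n x) : ℂ) = ((Real.cos (Real.pi / 8) ^ n : ℝ) : ℂ) := by
  rw [inner_pi_prod
      (fun i b => if b then ((Real.sin (Real.pi / 8) : ℝ) : ℂ)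
          else ((Real.cos (Real.pi / 8) : ℝ) : ℂ))
      (fun i b => if x i then ((Real.sqrt 2 : ℝ) : ℂ)⁻¹ else if b then 0 else 1)
      (Hstate n) (tilde n x) (fun w => rfl) (fun w => rfl)]
  rw [Complex.ofReal_pow]
  have hfac : ∀ i ∈ (Finset.univ : Finset (Fin n)),
      (∑ b : Bool, (starRingEnd ℂ)
          (if b then ((Real.sin (Real.pi / 8) : ℝ) : ℂ) else ((Real.cos (Real.pi / 8) : ℝ) : ℂ)) *
          (if x i then ((Real.sqrt 2 : ℝ) : ℂ)⁻¹ else if b then 0 else 1))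
        = ((Real.cos (Real.pi / 8) : ℝ) : ℂ) := by
    intro i _
    rw [Fintype.sum_bool]
    cases hx : x i
    · simp only [hx, Bool.false_eq_true, if_true, if_false, ite_true, ite_false,
        Complex.conj_ofReal, mul_zero, mul_one, zero_add, mul_comm]
      ring
    · simp only [hx, Bool.false_eq_true, if_true, if_false, ite_true, ite_false,
        Complex.conj_ofReal, mul_zero, mul_one, zero_add]
      have : ((Real.sin (Real.pi/8) : ℝ) : ℂ) * ((Real.sqrt 2 : ℝ) : ℂ)⁻¹
          + ((Real.cos (Real.pi/8) : ℝ) : ℂ) * ((Real.sqrt 2 : ℝ) : ℂ)⁻¹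
          = ((Real.cos (Real.pi/8) + Real.sin (Real.pi/8)) : ℝ) * ((Real.sqrt 2 : ℝ) : ℂ)⁻¹ := by
        push_cast; ring
      rw [this, cos_add_sin_pi_div_eight]
      have hs : ((Real.sqrt 2 : ℝ) : ℂ) ≠ 0 := by
        have : Real.sqrt 2 ≠ 0 := by positivity
        simpa using this
      push_cast
      field_simp
  rw [Finset.prod_congr rfl hfac, Finset.prod_const, Finset.card_univ, Fintype.card_fin]

/-- Mask of a boolean vector outside `T`. -/
def mask {n : ℕ} (T : Finset (Fin n)) (x : Fin n → Bool) : Fin n → Bool :=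
  fun i => if i ∈ T then x i else false

lemma mask_eq_iff {n : ℕ} (T : Finset (Fin n)) (x y : Fin n → Bool) :
    mask T x = mask T y ↔ ∀ i ∈ T, x i = y i := by
  constructor
  · intro h i hi
    have := congrFun h i
    simpa [mask, hi] using this
  · intro h
    funext i
    by_cases hi : i ∈ T <;> simp [mask, hi, h i]

lemma prod_ite_eq_mask {n : ℕ} (T : Finset (Fin n)) (x y : Fin n → Bool) (r : ℝ) :
    (∏ i ∈ T, (if x i = y i then r else 0))
      = (if mask T x = mask T y then (1:ℝ) else 0) * r ^ T.card := by
  by_cases h : mask T x = mask T y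
  · rw [if_pos h, one_mul, ← Finset.prod_const]
    exact Finset.prod_congr rfl fun i hi => if_pos ((mask_eq_iff T x y).1 h i hi)
  · rw [if_neg h, zero_mul]
    obtain ⟨i, hi, hxy⟩ : ∃ i ∈ T, x i ≠ y i := by
      by_contra hc
      push_neg at hc
      exact h ((mask_eq_iff T x y).2 hc)
    exact Finset.prod_eq_zero hi (if_neg hxy)

/-- The key Gram-matrix inequality, real version:
`(∑_{x∈S} u x)² ≤ |S| ∑_{x,y∈S} K(x,y) u x u y`. -/
lemma real_key {n : ℕ} (S : Finset (Fin n → Bool)) (u : (Fin n → Bool) → ℝ) :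
    (∑ x ∈ S, u x) ^ 2 ≤ S.card * ∑ x ∈ S, ∑ y ∈ S, Kgram x y * (u x * u y) := by
  classical
  set s : ℝ := (Real.sqrt 2)⁻¹ with hs
  have hs0 : 0 ≤ s := by positivity
  have hs1 : s ≤ 1 := by
    rw [hs]
    have h1 : (1:ℝ) ≤ Real.sqrt 2 := by
      nlinarith [Real.sq_sqrt (show (0:ℝ) ≤ 2 by norm_num), Real.sqrt_nonneg 2]
    exact inv_le_one_of_one_le₀ h1
  set w : Finset (Fin n) → ℝ := fun T => (1 - s) ^ T.card * s ^ (Tᶜ.card) with hwdef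
  have hw0 : ∀ T, 0 ≤ w T := fun T => by
    have : 0 ≤ 1 - s := by linarith
    positivity
  have hK : ∀ x y : Fin n → Bool, Kgram x y
      = ∑ T : Finset (Fin n), (if mask T x = mask T y then (1:ℝ) else 0) * w T := by
    intro x y
    have hstep : ∀ i : Fin n, (if x i = y i then (1:ℝ) else s)
        = (if x i = y i then 1 - s else 0) + s := by
      intro i
      by_cases h : x i = y i
      · rw [if_pos h, if_pos h]; ring
      · rw [if_neg h, if_neg h]; ring
    rw [Kgram]
    simp only [hs] at hstep ⊢
    simp_rw [hstep]
    rw [Fintype.prod_add]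
    refine Finset.sum_congr rfl fun T _ => ?_
    rw [Finset.prod_const, prod_ite_eq_mask, hwdef]
    ring
  have hsum1 : ∑ T : Finset (Fin n), w T = 1 := by
    have h := (Fintype.prod_add (fun _ : Fin n => 1 - s) (fun _ : Fin n => s)).symm
    calc ∑ T : Finset (Fin n), w T
        = ∑ T : Finset (Fin n), (∏ _a ∈ T, (1 - s)) * ∏ _a ∈ Tᶜ, s := by
          refine Finset.sum_congr rfl fun T _ => ?_
          rw [hwdef]
          simp [Finset.prod_const]
      _ = ∏ _a : Fin n, (1 - s + s) := h
      _ = 1 := by simp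
  have fiber : ∀ T : Finset (Fin n),
      (∑ x ∈ S, u x) ^ 2 ≤ S.card *
        ∑ x ∈ S, ∑ y ∈ S, (if mask T x = mask T y then (1:ℝ) else 0) * (u x * u y) := by
    intro T
    set g : (Fin n → Bool) → ℝ := fun κ => ∑ y ∈ S with mask T y = κ, u y with hg
    have hmaps : ∀ x ∈ S, mask T x ∈ S.image (mask T) :=
      fun x hx => Finset.mem_image_of_mem _ hx
    have hinner : ∀ x ∈ S, ∑ y ∈ S, (if mask T x = mask T y then (1:ℝ) else 0) * (u x * u y)
        = u x * g (mask T x) := by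
      intro x _
      rw [hg, Finset.mul_sum, Finset.sum_filter]
      refine Finset.sum_congr rfl fun y _ => ?_
      by_cases h : mask T x = mask T y
      · rw [if_pos h, if_pos h.symm, one_mul]
      · rw [if_neg h, if_neg (fun hh => h hh.symm), zero_mul]
    have h1 : ∑ x ∈ S, ∑ y ∈ S, (if mask T x = mask T y then (1:ℝ) else 0) * (u x * u y)
        = ∑ κ ∈ S.image (mask T), (g κ) ^ 2 := by
      rw [Finset.sum_congr rfl hinner,
        ← Finset.sum_fiberwise_of_maps_to hmaps (fun x => u x * g (mask T x))]
      refine Finset.sum_congr rfl fun κ _ => ?_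
      have : ∀ x ∈ S.filter (fun x => mask T x = κ), u x * g (mask T x) = u x * g κ := by
        intro x hx
        rw [(Finset.mem_filter.1 hx).2]
      rw [Finset.sum_congr rfl this, ← Finset.sum_mul, hg]
      ring
    have h2 : ∑ x ∈ S, u x = ∑ κ ∈ S.image (mask T), g κ := by
      rw [hg, ← Finset.sum_fiberwise_of_maps_to hmaps u]
    rw [h1, h2]
    calc (∑ κ ∈ S.image (mask T), g κ) ^ 2
        ≤ (S.image (mask T)).card * ∑ κ ∈ S.image (mask T), (g κ) ^ 2 :=
          sq_sum_le_card_mul_sum_sq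
      _ ≤ S.card * ∑ κ ∈ S.image (mask T), (g κ) ^ 2 := by
          refine mul_le_mul_of_nonneg_right ?_ (by positivity)
          exact_mod_cast Finset.card_image_le
  have expand : ∑ x ∈ S, ∑ y ∈ S, Kgram x y * (u x * u y)
      = ∑ T : Finset (Fin n), w T *
          ∑ x ∈ S, ∑ y ∈ S, (if mask T x = mask T y then (1:ℝ) else 0) * (u x * u y) := by
    have hpt : ∀ x y : Fin n → Bool, Kgram x y * (u x * u y)
        = ∑ T : Finset (Fin n),
            w T * ((if mask T x = mask T y then (1:ℝ) else 0) * (u x * u y)) := by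
      intro x y
      rw [hK, Finset.sum_mul]
      exact Finset.sum_congr rfl fun T _ => by ring
    simp_rw [hpt]
    have swap1 : ∀ x ∈ S, (∑ y ∈ S, ∑ T : Finset (Fin n),
          w T * ((if mask T x = mask T y then (1:ℝ) else 0) * (u x * u y)))
        = ∑ T : Finset (Fin n), ∑ y ∈ S,
            w T * ((if mask T x = mask T y then (1:ℝ) else 0) * (u x * u y)) :=
      fun x _ => Finset.sum_comm
    rw [Finset.sum_congr rfl swap1, Finset.sum_comm]
    refine Finset.sum_congr rfl fun T _ => ?_
    rw [Finset.mul_sum]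
    refine Finset.sum_congr rfl fun x _ => ?_
    rw [Finset.mul_sum]
  calc (∑ x ∈ S, u x) ^ 2
      = ∑ T : Finset (Fin n), w T * (∑ x ∈ S, u x) ^ 2 := by
        rw [← Finset.sum_mul, hsum1, one_mul]
    _ ≤ ∑ T : Finset (Fin n), w T * (S.card *
          ∑ x ∈ S, ∑ y ∈ S, (if mask T x = mask T y then (1:ℝ) else 0) * (u x * u y)) :=
        Finset.sum_le_sum fun T _ => mul_le_mul_of_nonneg_left (fiber T) (hw0 T)
    _ = S.card * ∑ x ∈ S, ∑ y ∈ S, Kgram x y * (u x * u y) := by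
        rw [expand, Finset.mul_sum]
        refine Finset.sum_congr rfl fun T _ => ?_
        ring

/-- The key Gram-matrix inequality, complex version. -/
lemma complex_key {n : ℕ} (S : Finset (Fin n → Bool)) (c : (Fin n → Bool) → ℂ) :
    ‖∑ x ∈ S, c x‖ ^ 2 ≤
      S.card * (∑ x ∈ S, ∑ y ∈ S,
        (starRingEnd ℂ) (c x) * c y * ((Kgram x y : ℝ) : ℂ)).re := by
  have hterm : ∀ x y : Fin n → Bool,
      ((starRingEnd ℂ) (c x) * c y * ((Kgram x y : ℝ) : ℂ)).re
        = Kgram x y * ((c x).re * (c y).re) + Kgram x y * ((c x).im * (c y).im) := by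
    intro x y
    simp [Complex.mul_re, Complex.mul_im]
    ring
  have hre : (∑ x ∈ S, ∑ y ∈ S, (starRingEnd ℂ) (c x) * c y * ((Kgram x y : ℝ) : ℂ)).re
      = (∑ x ∈ S, ∑ y ∈ S, Kgram x y * ((c x).re * (c y).re))
        + ∑ x ∈ S, ∑ y ∈ S, Kgram x y * ((c x).im * (c y).im) := by
    rw [Complex.re_sum, ← Finset.sum_add_distrib]
    refine Finset.sum_congr rfl fun x _ => ?_
    rw [Complex.re_sum, ← Finset.sum_add_distrib]
    exact Finset.sum_congr rfl fun y _ => hterm x y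
  have h1 := real_key S (fun x => (c x).re)
  have h2 := real_key S (fun x => (c x).im)
  have hz : ∀ z : ℂ, ‖z‖ ^ 2 = z.re ^ 2 + z.im ^ 2 := by
    intro z
    rw [Complex.sq_norm, Complex.normSq_apply]
    ring
  have hnorm : ‖∑ x ∈ S, c x‖ ^ 2
      = (∑ x ∈ S, (c x).re) ^ 2 + (∑ x ∈ S, (c x).im) ^ 2 := by
    rw [hz, Complex.re_sum, Complex.im_sum]
  rw [hnorm, hre, mul_add]
  exact add_le_add h1 h2

/-- Lower bound on the size of a product-stabilizer decomposition:
any unit vector `ψ` in the span of `{|x̃⟩ : x ∈ S}` satisfies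
`|S| ≥ |⟨H^{⊗n}|ψ⟩|² · cos(π/8)^{−2n}`. -/
theorem stab_rank_lower_bound (n : ℕ) (S : Finset (Fin n → Bool))
    (ψ : EuclideanSpace ℂ (Fin n → Bool)) (hψ : ‖ψ‖ = 1)
    (hmem : ψ ∈ Submodule.span ℂ (tilde n '' (S : Set (Fin n → Bool)))) :
    (S.card : ℝ) ≥ ‖(inner ℂ (Hstate n) ψ : ℂ)‖ ^ 2 / Real.cos (Real.pi / 8) ^ (2 * n) := by
  classical
  have hcos : 0 < Real.cos (Real.pi / 8) := by
    apply Real.cos_pos_of_mem_Ioo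
    constructor
    · have := Real.pi_pos; linarith
    · have := Real.pi_pos; linarith
  rw [← Finset.coe_image] at hmem
  obtain ⟨f, -, hf⟩ := Submodule.mem_span_finset.1 hmem
  set c : (Fin n → Bool) → ℂ := fun x => f (tilde n x) with hc
  have hψ' : ψ = ∑ x ∈ S, c x • tilde n x := by
    rw [← hf, Finset.sum_image (fun x _ y _ h => tilde_injective n h)]
  have hH : (inner ℂ (Hstate n) ψ : ℂ)
      = ((Real.cos (Real.pi / 8) ^ n : ℝ) : ℂ) * ∑ x ∈ S, c x := by
    rw [hψ', inner_sum]
    simp_rw [inner_smul_right, inner_H_tilde]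
    rw [Finset.mul_sum]
    exact Finset.sum_congr rfl fun x _ => by ring
  have hGram : (inner ℂ ψ ψ : ℂ)
      = ∑ x ∈ S, ∑ y ∈ S, (starRingEnd ℂ) (c x) * c y * ((Kgram x y : ℝ) : ℂ) := by
    rw [hψ', sum_inner]
    refine Finset.sum_congr rfl fun x _ => ?_
    rw [inner_smul_left, inner_sum, Finset.mul_sum]
    refine Finset.sum_congr rfl fun y _ => ?_
    rw [inner_smul_right, inner_tilde_tilde]
    ring
  have hone : (∑ x ∈ S, ∑ y ∈ S,
      (starRingEnd ℂ) (c x) * c y * ((Kgram x y : ℝ) : ℂ)).re = 1 := by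
    rw [← hGram]
    have := inner_self_eq_norm_sq (𝕜 := ℂ) ψ
    rw [hψ] at this
    simpa using this
  have hkey := complex_key S c
  rw [hone, mul_one] at hkey
  have hnormH : ‖(inner ℂ (Hstate n) ψ : ℂ)‖ ^ 2
      = Real.cos (Real.pi / 8) ^ (2 * n) * ‖∑ x ∈ S, c x‖ ^ 2 := by
    rw [hH, norm_mul, mul_pow, Complex.norm_real, Real.norm_eq_abs,
      abs_of_nonneg (by positivity), ← pow_mul]
    ring_nf
  rw [ge_iff_le, div_le_iff₀ (by positivity)]
  rw [hnormH]
  calc Real.cos (Real.pi / 8) ^ (2 * n) * ‖∑ x ∈ S, c x‖ ^ 2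
      ≤ Real.cos (Real.pi / 8) ^ (2 * n) * S.card := by
        exact mul_le_mul_of_nonneg_left hkey (by positivity)
    _ = (S.card : ℝ) * Real.cos (Real.pi / 8) ^ (2 * n) := by ring
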